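/- Let ζ ∈ (0,1], let r, t > 0 satisfy r − t ≥ (2/ζ)t, and let ξ, η ∈ [0,1]. Define λ(t) = r + tη − 2tηξ and Θ̃(r,t,η,ξ) = (λ(t)² + r² − t²η²)/(2r·λ(t)). Then the partial derivative of Θ̃ with respect to t satisfies −5ζ/(3·λ(t)) ≤ ∂Θ̃/∂t (r,t,η,ξ) ≤ 0. -/

import Mathlib

open Set

/-- `λ(t) = r + tη - 2tηξ`. -/
noncomputable def lamf (r t η ξ : ℝ) : ℝ := r + t * η - 2 * t * η * ξ

/-- `Θ̃(r,t,η,ξ) = (λ(t)² + r² - t²η²)/(2r·λ(t))`. -/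
noncomputable def Thetaf (r t η ξ : ℝ) : ℝ :=
  ((lamf r t η ξ) ^ 2 + r ^ 2 - t ^ 2 * η ^ 2) / (2 * r * lamf r t η ξ)

/-- bounds on the `t`-derivative of `Θ̃`. -/
theorem stmt_17 (ζ : ℝ) (hζ0 : 0 < ζ) (hζ1 : ζ ≤ 1)
    (r t : ℝ) (hr : 0 < r) (ht : 0 < t) (hrt : (2 / ζ) * t ≤ r - t)
    (ξ η : ℝ) (hξ : ξ ∈ Icc (0 : ℝ) 1) (hη : η ∈ Icc (0 : ℝ) 1) :
    -(5 * ζ / (3 * lamf r t η ξ)) ≤ deriv (fun t' : ℝ => Thetaf r t' η ξ) t ∧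
    deriv (fun t' : ℝ => Thetaf r t' η ξ) t ≤ 0 := by
  obtain ⟨hξ0, hξ1⟩ := hξ
  obtain ⟨hη0, hη1⟩ := hη
  have hrt' : 0 < r - t := lt_of_lt_of_le (by positivity) hrt
  obtain ⟨a, ha⟩ : ∃ a : ℝ, a = η - 2 * η * ξ := ⟨_, rfl⟩
  have ha1 : -1 ≤ a := by
    rw [ha]; nlinarith [mul_nonneg (sub_nonneg.2 hη1) hξ0, mul_nonneg hη0 (sub_nonneg.2 hξ1)]
  have ha2 : a ≤ 1 := by
    rw [ha]; nlinarith [mul_nonneg hη0 hξ0]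
  have hlam : lamf r t η ξ = r + t * a := by rw [ha]; simp only [lamf]; ring
  have hlamge : r - t ≤ r + t * a := by nlinarith [mul_le_mul_of_nonneg_left ha1 ht.le]
  have hlampos : 0 < r + t * a := lt_of_lt_of_le hrt' hlamge
  have hden : (2 : ℝ) * r * (r + t * a) ≠ 0 := by positivity
  have h1 : HasDerivAt (fun t' : ℝ => r + t' * a) a t := by
    simpa using ((hasDerivAt_id t).mul_const a).const_add r
  have hnum : HasDerivAt (fun t' : ℝ => (r + t' * a) ^ 2 + r ^ 2 - t' ^ 2 * η ^ 2)
      (2 * (r + t * a) * a - 2 * t * η ^ 2) t := by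
    have h2 : HasDerivAt (fun t' : ℝ => (r + t' * a) ^ 2) (2 * (r + t * a) * a) t := by
      simpa [mul_comm, mul_assoc] using h1.fun_pow 2
    have h3 : HasDerivAt (fun t' : ℝ => t' ^ 2 * η ^ 2) (2 * t * η ^ 2) t := by
      simpa [mul_comm, mul_assoc] using (hasDerivAt_pow 2 t).mul_const (η ^ 2)
    simpa using (h2.add_const (r ^ 2)).fun_sub h3
  have hdeno : HasDerivAt (fun t' : ℝ => 2 * r * (r + t' * a)) (2 * r * a) t := by
    simpa using h1.const_mul (2 * r)
  have hdiv := hnum.fun_div hdeno hden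
  have hfun : (fun t' : ℝ => Thetaf r t' η ξ) =
      fun t' : ℝ => ((r + t' * a) ^ 2 + r ^ 2 - t' ^ 2 * η ^ 2) / (2 * r * (r + t' * a)) := by
    funext t'
    have h : lamf r t' η ξ = r + t' * a := by rw [ha]; simp only [lamf]; ring
    simp [Thetaf, h]
  have hD : deriv (fun t' : ℝ => Thetaf r t' η ξ) t =
      -(t * (η ^ 2 - a ^ 2) * ((r + t * a) + r)) / (2 * r * (r + t * a) ^ 2) := by
    rw [hfun, hdiv.deriv]
    field_simp
    ring
  rw [hD, hlam]
  have haη : a ^ 2 ≤ η ^ 2 := by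
    rw [ha]; nlinarith [mul_nonneg (mul_nonneg (sq_nonneg η) hξ0) (sub_nonneg.2 hξ1)]
  have hη2 : η ^ 2 - a ^ 2 ≤ 1 := by nlinarith [sq_nonneg a]
  have hkey : 0 ≤ t * (η ^ 2 - a ^ 2) * ((r + t * a) + r) :=
    mul_nonneg (mul_nonneg ht.le (by linarith)) (by linarith)
  constructor
  · -- lower bound
    have htζ : 2 * t ≤ ζ * (r - t) := by
      rw [div_mul_eq_mul_div, div_le_iff₀ hζ0] at hrt
      linarith [mul_comm (r - t) ζ]
    have htL : 2 * t ≤ ζ * (r + t * a) :=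
      le_trans htζ (mul_le_mul_of_nonneg_left hlamge hζ0.le)
    have hLle : r + t * a ≤ 2 * r := by nlinarith [mul_le_mul_of_nonneg_left ha2 ht.le]
    rw [neg_div]
    apply neg_le_neg
    rw [div_le_div_iff₀ (by positivity) (by positivity)]
    have hpr : (0 : ℝ) ≤ ((r + t * a) + r) * (r + t * a) :=
      mul_nonneg (by linarith) hlampos.le
    nlinarith [mul_le_mul_of_nonneg_right hη2 (mul_nonneg ht.le hpr),
      mul_le_mul_of_nonneg_right htL hpr,
      mul_le_mul_of_nonneg_right hLle (mul_nonneg (mul_nonneg hζ0.le hlampos.le) hlampos.le),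
      mul_nonneg (mul_nonneg hζ0.le hr.le) (mul_nonneg hlampos.le hlampos.le)]
  · exact div_nonpos_of_nonpos_of_nonneg (neg_nonpos.2 hkey) (by positivity)
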